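/- Let k0 > 0, f : ℝ³ → ℝ be integrable, R_s, R_t ∈ SO(3), and d_s, d_t ∈ ℝ³. (i) If R_s·e3 = R_t·e3 and α ∈ ℝ is such that R_sᵀR_t = Q³(α), then for all k ∈ B with μ_s(k) ≠ 0: e^{i⟨R_t·d_t − R_s·d_s, R_s·h(k)⟩} = μ_s(k) / μ_t(Q(−α)·k). (ii) If R_s·e3 = −R_t·e3 and α ∈ ℝ is such that R_sᵀR_t = Q²(π)·Q³(α), then for all k ∈ B with μ_s(k) ≠ 0: e^{i⟨R_t·d_t − R_s·d_s, R_s·h(k)⟩} = μ_s(k) / conj(μ_t(Q(−α)·S·k)). -/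

import Mathlib

noncomputable section
open Real Set MeasureTheory
open scoped RealInnerProductSpace

abbrev R3 : Type := EuclideanSpace ℝ (Fin 3)
abbrev R2 : Type := EuclideanSpace ℝ (Fin 2)
abbrev Mat3 : Type := Matrix (Fin 3) (Fin 3) ℝ

def SO3 (R : Mat3) : Prop := R.transpose * R = 1 ∧ R.det = 1

def e3 : R3 := WithLp.toLp 2 (![0, 0, 1] : Fin 3 → ℝ)

def act3 (R : Mat3) (x : R3) : R3 := WithLp.toLp 2 (R.mulVec x)

def cross3 (x y : R3) : R3 := WithLp.toLp 2 (crossProduct x y)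

def rotE3 (R : Mat3) : R3 := act3 R e3

def v1 (Rs Rt : Mat3) : R3 := ‖rotE3 Rs + rotE3 Rt‖⁻¹ • (rotE3 Rs + rotE3 Rt)

def v2 (Rs Rt : Mat3) : R3 :=
  ‖cross3 (rotE3 Rs) (rotE3 Rt)‖⁻¹ • cross3 (rotE3 Rs) (rotE3 Rt)

def v3 (Rs Rt : Mat3) : R3 := ‖rotE3 Rs - rotE3 Rt‖⁻¹ • (rotE3 Rs - rotE3 Rt)

def aRad (k0 : ℝ) (Rs Rt : Mat3) : ℝ := k0 / 2 * ‖rotE3 Rs + rotE3 Rt‖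

def sigmaArc (k0 : ℝ) (Rs Rt : Mat3) (β : ℝ) : R3 :=
  (aRad k0 Rs Rt * (Real.cos β - 1)) • v1 Rs Rt + (aRad k0 Rs Rt * Real.sin β) • v2 Rs Rt

def cST (Rs Rt : Mat3) : ℝ := ⟪rotE3 Rs, rotE3 Rt⟫

def Jset (Rs Rt : Mat3) : Set ℝ :=
  if cST Rs Rt ≤ 0 then Ioc (-π) π
  else Ioo (-(Real.arccos ((cST Rs Rt - 1) / (cST Rs Rt + 1))))
    (Real.arccos ((cST Rs Rt - 1) / (cST Rs Rt + 1)))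

def kappa (k0 : ℝ) (k : R2) : ℝ := Real.sqrt (k0 ^ 2 - ‖k‖ ^ 2)

def hmap (k0 : ℝ) (k : R2) : R3 := WithLp.toLp 2 (![k 0, k 1, kappa k0 k - k0] : Fin 3 → ℝ)

def ball2 (k0 : ℝ) : Set R2 := {k | ‖k‖ < k0}

def Hemi (k0 : ℝ) (R : Mat3) : Set R3 := (fun k => act3 R (hmap k0 k)) '' ball2 k0

def Q2mat (α : ℝ) : Mat3 :=
  !![Real.cos α, 0, Real.sin α; 0, 1, 0; -Real.sin α, 0, Real.cos α]

def Q3mat (α : ℝ) : Mat3 :=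
  !![Real.cos α, -Real.sin α, 0; Real.sin α, Real.cos α, 0; 0, 0, 1]

/-- The 3D Fourier transform `𝓕f(y) = (2π)^{−3/2} ∫ f(x) e^{−i⟨x,y⟩} dx`. -/
def FT (f : R3 → ℝ) (y : R3) : ℂ :=
  ((2 * π : ℝ) ^ (-(3 : ℝ) / 2) : ℝ) *
    ∫ x : R3, (f x : ℂ) * Complex.exp (-Complex.I * (⟪x, y⟫ : ℝ))

/-- The scaled squared energy `ν_R(k) = |𝓕f(R·h(k))|²`. -/
def nu (k0 : ℝ) (f : R3 → ℝ) (R : Mat3) (k : R2) : ℝ :=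
  ‖FT f (act3 R (hmap k0 k))‖ ^ 2

def rot2 (α : ℝ) : Matrix (Fin 2) (Fin 2) ℝ :=
  !![Real.cos α, -Real.sin α; Real.sin α, Real.cos α]

def act2 (Q : Matrix (Fin 2) (Fin 2) ℝ) (k : R2) : R2 := WithLp.toLp 2 (Q.mulVec k)

def Smat : Matrix (Fin 2) (Fin 2) ℝ := !![1, 0; 0, -1]

/-- The scaled measurement data `μ(k) = 𝓕f(R·h(k))·e^{−i⟨d, h(k)⟩}` for a rotation `R` and a
translation `d`. -/
def muData (k0 : ℝ) (f : R3 → ℝ) (R : Mat3) (d : R3) (k : R2) : ℂ :=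
  FT f (act3 R (hmap k0 k)) * Complex.exp (-Complex.I * (⟪d, hmap k0 k⟫ : ℝ))


section Aux

lemma normsq2' (k : R2) : ‖k‖^2 = k 0 ^2 + k 1 ^2 := by
  rw [EuclideanSpace.norm_eq, Real.sq_sqrt (by positivity)]
  simp [Fin.sum_univ_two, sq_abs]

lemma kappa_rot' (k0 α : ℝ) (k : R2) : kappa k0 (act2 (rot2 (-α)) k) = kappa k0 k := by
  unfold kappa
  congr 1
  rw [normsq2', normsq2']
  simp [act2, rot2, Matrix.mulVec, dotProduct, Fin.sum_univ_two]
  linear_combination (k 0 ^ 2 + k 1 ^ 2) * Real.sin_sq_add_cos_sq α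

lemma kappa_rotS' (k0 α : ℝ) (k : R2) : kappa k0 (act2 (rot2 (-α) * Smat) k) = kappa k0 k := by
  unfold kappa
  congr 1
  rw [normsq2', normsq2']
  simp [act2, rot2, Smat, Matrix.mul_apply, Matrix.mulVec, dotProduct, Fin.sum_univ_two]
  linear_combination (k 0 ^ 2 + k 1 ^ 2) * Real.sin_sq_add_cos_sq α

lemma key1' (k0 α : ℝ) (k : R2) :
    act3 (Q3mat α) (hmap k0 (act2 (rot2 (-α)) k)) = hmap k0 k := by
  have hκ := kappa_rot' k0 α k
  set k' := act2 (rot2 (-α)) k with hk'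
  have h0 : k' 0 = Real.cos α * k 0 + Real.sin α * k 1 := by
    simp [hk', act2, rot2, Matrix.mulVec, dotProduct, Fin.sum_univ_two]
  have h1 : k' 1 = -(Real.sin α * k 0) + Real.cos α * k 1 := by
    simp [hk', act2, rot2, Matrix.mulVec, dotProduct, Fin.sum_univ_two]
  have hs := Real.sin_sq_add_cos_sq α
  ext i
  fin_cases i <;>
    simp [act3, hmap, Q3mat, Matrix.mulVec, dotProduct, Fin.sum_univ_three, hκ, h0, h1]
  · linear_combination (k 0) * hs
  · linear_combination (k 1) * hs

lemma key2' (k0 α : ℝ) (k : R2) :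
    act3 (Q2mat π * Q3mat α) (hmap k0 (act2 (rot2 (-α) * Smat) k)) = -(hmap k0 k) := by
  have hκ := kappa_rotS' k0 α k
  set k' := act2 (rot2 (-α) * Smat) k with hk'
  have h0 : k' 0 = Real.cos α * k 0 - Real.sin α * k 1 := by
    simp [hk', act2, rot2, Smat, Matrix.mul_apply, Matrix.mulVec, dotProduct,
      Fin.sum_univ_two]
    ring
  have h1 : k' 1 = -(Real.sin α * k 0) - Real.cos α * k 1 := by
    simp [hk', act2, rot2, Smat, Matrix.mul_apply, Matrix.mulVec, dotProduct,
      Fin.sum_univ_two]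
    ring
  have hs := Real.sin_sq_add_cos_sq α
  ext i
  fin_cases i <;>
    simp [act3, hmap, Q2mat, Q3mat, Matrix.mul_apply, Matrix.mulVec, dotProduct,
      Fin.sum_univ_three, hκ, h0, h1]
  · linear_combination (-(k 0)) * hs
  · linear_combination (-(k 1)) * hs

lemma inner_act' (R : Mat3) (hR : R.transpose * R = 1) (x y : R3) :
    ⟪act3 R x, act3 R y⟫ = ⟪x, y⟫ := by
  have h1 : ∀ a b : R3, ⟪a, b⟫ = dotProduct (fun i => a i) (fun i => b i) := by
    intro a b
    simp [PiLp.inner_apply, dotProduct, mul_comm]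
  rw [h1, h1]
  show dotProduct (R.mulVec x) (R.mulVec y) = _
  rw [Matrix.dotProduct_mulVec, ← Matrix.mulVec_transpose, Matrix.mulVec_mulVec, hR,
    Matrix.one_mulVec]

lemma act3_mul' (A B : Mat3) (x : R3) : act3 (A * B) x = act3 A (act3 B x) := by
  show WithLp.toLp 2 ((A * B).mulVec x) = WithLp.toLp 2 (A.mulVec (B.mulVec x))
  rw [Matrix.mulVec_mulVec]

lemma act3_neg' (A : Mat3) (x : R3) : act3 A (-x) = -(act3 A x) := by
  show WithLp.toLp 2 (A.mulVec (-x)) = -(WithLp.toLp 2 (A.mulVec x))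
  rw [Matrix.mulVec_neg]
  rfl

lemma FT_neg' (f : R3 → ℝ) (y : R3) : FT f (-y) = (starRingEnd ℂ) (FT f y) := by
  unfold FT
  rw [map_mul, Complex.conj_ofReal, ← integral_conj]
  congr 1
  refine integral_congr_ae (Filter.Eventually.of_forall fun x => ?_)
  beta_reduce
  rw [map_mul, Complex.conj_ofReal, ← Complex.exp_conj]
  congr 2
  rw [inner_neg_right]
  push_cast
  simp [Complex.ext_iff]

lemma Rt_eq (Rs Rt M : Mat3) (hRs : Rs.transpose * Rs = 1) (hQ : Rs.transpose * Rt = M) :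
    Rt = Rs * M := by
  have h2 : Rs * Rs.transpose = 1 := mul_eq_one_comm.mp hRs
  calc Rt = (Rs * Rs.transpose) * Rt := by rw [h2, one_mul]
    _ = Rs * (Rs.transpose * Rt) := by rw [mul_assoc]
    _ = Rs * M := by rw [hQ]

end Aux

/-- Lemma: phase shift in the special cases `Rs·e3 = ±Rt·e3`.
(i) If `Rs·e3 = Rt·e3` and `Rsᵀ Rt = Q³(α)`, then for all `k ∈ B` with `μ_s(k) ≠ 0`,
`e^{i⟨R_t d_t − R_s d_s, R_s h(k)⟩} = μ_s(k) / μ_t(Q(−α)·k)`.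
(ii) If `Rs·e3 = −Rt·e3` and `Rsᵀ Rt = Q²(π)·Q³(α)`, then for all `k ∈ B` with `μ_s(k) ≠ 0`,
`e^{i⟨R_t d_t − R_s d_s, R_s h(k)⟩} = μ_s(k) / conj(μ_t(Q(−α)·S·k))`. -/
theorem phase_shift_special_cases (k0 : ℝ) (hk0 : 0 < k0) (f : R3 → ℝ)
    (hf : MeasureTheory.Integrable f) (Rs Rt : Mat3) (hRs : SO3 Rs) (hRt : SO3 Rt)
    (ds dt : R3) :
    (rotE3 Rs = rotE3 Rt →
      ∀ α : ℝ, Rs.transpose * Rt = Q3mat α →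
        ∀ k ∈ ball2 k0, muData k0 f Rs ds k ≠ 0 →
          Complex.exp (Complex.I * (⟪act3 Rt dt - act3 Rs ds, act3 Rs (hmap k0 k)⟫ : ℝ))
            = muData k0 f Rs ds k / muData k0 f Rt dt (act2 (rot2 (-α)) k)) ∧
    (rotE3 Rs = -rotE3 Rt →
      ∀ α : ℝ, Rs.transpose * Rt = Q2mat π * Q3mat α →
        ∀ k ∈ ball2 k0, muData k0 f Rs ds k ≠ 0 →
          Complex.exp (Complex.I * (⟪act3 Rt dt - act3 Rs ds, act3 Rs (hmap k0 k)⟫ : ℝ))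
            = muData k0 f Rs ds k
                / (starRingEnd ℂ) (muData k0 f Rt dt (act2 (rot2 (-α) * Smat) k))) := by
  have hRs1 := hRs.1
  have hRt1 := hRt.1
  constructor
  · intro _ α hQ k _ hne
    have hRsRt : Rt = Rs * Q3mat α := Rt_eq Rs Rt _ hRs1 hQ
    have hvec : act3 Rt (hmap k0 (act2 (rot2 (-α)) k)) = act3 Rs (hmap k0 k) := by
      rw [hRsRt, act3_mul', key1']
    unfold muData at hne ⊢
    rw [hvec]
    have hF : FT f (act3 Rs (hmap k0 k)) ≠ 0 := left_ne_zero_of_mul hne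
    rw [mul_div_mul_left _ _ hF, ← Complex.exp_sub]
    congr 1
    have h1 : ⟪act3 Rt dt, act3 Rs (hmap k0 k)⟫ = ⟪dt, hmap k0 (act2 (rot2 (-α)) k)⟫ := by
      rw [← hvec, inner_act' Rt hRt1]
    have h2 : ⟪act3 Rs ds, act3 Rs (hmap k0 k)⟫ = ⟪ds, hmap k0 k⟫ := inner_act' Rs hRs1 _ _
    rw [inner_sub_left, h1, h2]
    push_cast
    ring
  · intro _ α hQ k _ hne
    have hRsRt : Rt = Rs * (Q2mat π * Q3mat α) := Rt_eq Rs Rt _ hRs1 hQ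
    have hvec : act3 Rt (hmap k0 (act2 (rot2 (-α) * Smat) k)) = -(act3 Rs (hmap k0 k)) := by
      rw [hRsRt, act3_mul', key2', act3_neg']
    unfold muData at hne ⊢
    have hF : FT f (act3 Rs (hmap k0 k)) ≠ 0 := left_ne_zero_of_mul hne
    have hconj : (starRingEnd ℂ)
        (FT f (act3 Rt (hmap k0 (act2 (rot2 (-α) * Smat) k))) *
          Complex.exp (-Complex.I * (⟪dt, hmap k0 (act2 (rot2 (-α) * Smat) k)⟫ : ℝ))) =
        FT f (act3 Rs (hmap k0 k)) *
          Complex.exp (Complex.I * (⟪dt, hmap k0 (act2 (rot2 (-α) * Smat) k)⟫ : ℝ)) := by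
      rw [map_mul, hvec, FT_neg', Complex.conj_conj, ← Complex.exp_conj]
      congr 2
      simp [map_mul, Complex.conj_ofReal, Complex.conj_I]
    rw [hconj, mul_div_mul_left _ _ hF, ← Complex.exp_sub]
    congr 1
    have h1 : ⟪act3 Rt dt, act3 Rs (hmap k0 k)⟫
        = -⟪dt, hmap k0 (act2 (rot2 (-α) * Smat) k)⟫ := by
      rw [show act3 Rs (hmap k0 k) = -(act3 Rt (hmap k0 (act2 (rot2 (-α) * Smat) k))) from by
        rw [hvec, neg_neg], inner_neg_right, inner_act' Rt hRt1]
    have h2 : ⟪act3 Rs ds, act3 Rs (hmap k0 k)⟫ = ⟪ds, hmap k0 k⟫ := inner_act' Rs hRs1 _ _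
    rw [inner_sub_left, h1, h2]
    push_cast
    ring
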